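/- With the annulus setup and ε(h) → 0, there exists h₀ > 0 such that for any normalized ψ_h ∈ A_r with P_h ψ_h = (E₀+ε(h))ψ_h and any ε > 0 there exist C, d > 0 with ‖ψ_h‖_{L²((R₀,R₂)∖[R₁−ε,R₁+ε])} ≤ C e^{−d/h} for all h ≤ h₀. -/

import Mathlib

open Set Filter MeasureTheory intervalIntegral

set_option maxHeartbeats 1000000


private lemma cd2 (ψ : ℝ → ℝ) (h : ContDiff ℝ 2 ψ) :
    Differentiable ℝ ψ ∧ Differentiable ℝ (deriv ψ) ∧ Continuous (deriv (deriv ψ)) := by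
  have h2 : ContDiff ℝ ((1:WithTop ℕ∞) + 1) ψ := by exact_mod_cast h
  obtain ⟨hd, -, h1⟩ := contDiff_succ_iff_deriv.mp h2
  have h1' : ContDiff ℝ ((0:WithTop ℕ∞) + 1) (deriv ψ) := by exact_mod_cast h1
  obtain ⟨hd1, -, h0⟩ := contDiff_succ_iff_deriv.mp h1'
  exact ⟨hd, hd1, h0.continuous⟩


private lemma decay_right (a b K κ : ℝ) (ha : 0 < a) (hab : a < b) (hK : 0 ≤ K)
    (hκ0 : 0 ≤ κ) (hκ : κ ^ 2 ≤ 2 * K * a / b)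
    (ψ : ℝ → ℝ) (hψ : ContDiff ℝ 2 ψ) (hψb : ψ b = 0)
    (hode : ∀ r ∈ Ioo a b, K * ψ r ^ 2 ≤ (deriv (deriv ψ) r + (1 / r) * deriv ψ r) * ψ r)
    (t : ℝ) (ht : t ∈ Icc a b) :
    (∫ r in t..b, ψ r ^ 2) ≤ (∫ r in a..b, ψ r ^ 2) * Real.exp (-κ * (t - a)) := by
  obtain ⟨hd0, hd1, hc2⟩ := cd2 ψ hψ
  have hc0 : Continuous ψ := hd0.continuous
  have hc1 : Continuous (deriv ψ) := hd1.continuous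
  have hb0 : 0 < b := ha.trans hab
  set f : ℝ → ℝ := fun r => ψ r ^ 2 with hfdef
  set f1 : ℝ → ℝ := fun r => 2 * ψ r * deriv ψ r with hf1def
  set f2 : ℝ → ℝ := fun r => 2 * deriv ψ r ^ 2 + 2 * ψ r * deriv (deriv ψ) r with hf2def
  have hcf : Continuous f := hc0.pow 2
  have hcf1 : Continuous f1 := (continuous_const.mul hc0).mul hc1
  have hcf2 : Continuous f2 := (continuous_const.mul (hc1.pow 2)).add ((continuous_const.mul hc0).mul hc2)
  have hf1 : ∀ r, HasDerivAt f (f1 r) r := by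
    intro r
    have := ((hd0 r).hasDerivAt).pow 2
    simpa [f, f1, mul_comm, mul_assoc, Pi.pow_def] using this
  have hf2 : ∀ r, HasDerivAt f1 (f2 r) r := by
    intro r
    have h1 : HasDerivAt (fun x => 2 * ψ x) (2 * deriv ψ r) r := ((hd0 r).hasDerivAt).const_mul 2
    have h2 : HasDerivAt (deriv ψ) (deriv (deriv ψ) r) r := (hd1 r).hasDerivAt
    have h3 := h1.fun_mul h2
    refine h3.congr_deriv ?_
    simp [f2]; ring
  have hg : ∀ r, HasDerivAt (fun x => x * f1 x) (f1 r + r * f2 r) r := by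
    intro r
    have := (hasDerivAt_id r).fun_mul (hf2 r)
    refine this.congr_deriv ?_
    simp only [id_eq]
    ring
  have hfnn : ∀ r, 0 ≤ f r := fun r => sq_nonneg _
  have hfb : f b = 0 := by simp [f, hψb]
  have hf1b : f1 b = 0 := by
    have hmin : IsLocalMin f b := Filter.Eventually.of_forall fun x => by
      simp only [hfdef, hψb]
      nlinarith [sq_nonneg (ψ x)]
    have := hmin.deriv_eq_zero
    rwa [(hf1 b).deriv] at this
  have hkey : ∀ r ∈ Ioo a b, 2 * K * a * f r ≤ f1 r + r * f2 r := by
    intro r hr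
    have hr0 : 0 < r := ha.trans hr.1
    have hode' := hode r hr
    have hexp : f1 r + r * f2 r =
        2 * r * deriv ψ r ^ 2 +
          2 * r * ((deriv (deriv ψ) r + (1 / r) * deriv ψ r) * ψ r) := by
      field_simp [f1, f2]; ring
    have hfr : f r = ψ r ^ 2 := rfl
    rw [hexp, hfr]
    have h1 : 2 * K * a * ψ r ^ 2 ≤ 2 * K * r * ψ r ^ 2 := by
      nlinarith [mul_nonneg (mul_nonneg hK (sq_nonneg (ψ r)))
        (by linarith [hr.1] : (0:ℝ) ≤ r - a)]
    linarith [h1, mul_le_mul_of_nonneg_left hode' (by positivity : (0:ℝ) ≤ 2 * r),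
      mul_nonneg (by positivity : (0:ℝ) ≤ 2 * r) (sq_nonneg (deriv ψ r))]
  set F : ℝ → ℝ := fun u => ∫ x in u..b, f x with hFdef
  have hF : ∀ u, HasDerivAt F (-f u) u := by
    intro u
    have h1 : HasDerivAt (fun v => ∫ x in b..v, f x) (f u) u :=
      intervalIntegral.integral_hasDerivAt_right (hcf.intervalIntegrable _ _)
        (hcf.stronglyMeasurableAtFilter _ _) hcf.continuousAt
    have h2 := h1.neg
    have h3 : F = fun v => -∫ x in b..v, f x := by
      funext v; rw [hFdef]; exact intervalIntegral.integral_symm b v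
    rw [h3]; exact h2
  have hFnn : ∀ u, u ≤ b → 0 ≤ F u := fun u hu =>
    intervalIntegral.integral_nonneg hu (fun x _ => hfnn x)
  have hFb : F b = 0 := by simp [F]
  have hstep : ∀ r ∈ Icc a b, f1 r ≤ -(κ ^ 2) * F r := by
    intro r hr
    have hr0 : 0 < r := lt_of_lt_of_le ha hr.1
    have hrb : r ≤ b := hr.2
    have hftc : (∫ x in r..b, (f1 x + x * f2 x)) = b * f1 b - r * f1 r := by
      exact intervalIntegral.integral_eq_sub_of_hasDerivAt (fun x _ => hg x)
        ((hcf1.add (continuous_id.mul hcf2)).intervalIntegrable _ _)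
    have hA : ∀ᵐ x : ℝ, x ≠ a := by
      rw [ae_iff]; simpa using measure_singleton a
    have hB : ∀ᵐ x : ℝ, x ≠ b := by
      rw [ae_iff]; simpa using measure_singleton b
    have hmono : (∫ x in r..b, 2 * K * a * f x) ≤ ∫ x in r..b, (f1 x + x * f2 x) := by
      apply intervalIntegral.integral_mono_ae_restrict hrb
        ((continuous_const.mul hcf).intervalIntegrable _ _)
        ((hcf1.add (continuous_id.mul hcf2)).intervalIntegrable _ _)
      filter_upwards [ae_restrict_mem measurableSet_Icc, ae_restrict_of_ae hA,
        ae_restrict_of_ae hB] with x hx hxa hxb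
      refine hkey x ⟨?_, ?_⟩
      · exact lt_of_le_of_ne (le_trans hr.1 hx.1) (Ne.symm hxa)
      · exact lt_of_le_of_ne hx.2 hxb
    rw [intervalIntegral.integral_const_mul, hftc, hf1b] at hmono
    -- hmono : 2 * K * a * F r ≤ b * 0 - r * f1 r
    have hFr := hFnn r hrb
    have h4 : κ ^ 2 * b ≤ 2 * K * a := (le_div_iff₀ hb0).mp hκ
    have h5 : κ ^ 2 * r ≤ κ ^ 2 * b := mul_le_mul_of_nonneg_left hrb (sq_nonneg κ)
    have h6 : r * f1 r ≤ r * (-(κ ^ 2) * F r) := by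
      have h7 : κ ^ 2 * r * F r ≤ 2 * K * a * F r :=
        mul_le_mul_of_nonneg_right (h5.trans h4) hFr
      nlinarith [hmono]
    exact le_of_mul_le_mul_left h6 hr0
  set H : ℝ → ℝ := fun r => (-f r + κ * F r) * Real.exp (-κ * r) with hHdef
  have hH : ∀ r, HasDerivAt H ((-f1 r + κ * (-f r)) * Real.exp (-κ * r) +
      (-f r + κ * F r) * (Real.exp (-κ * r) * -κ)) r := by
    intro r
    have he : HasDerivAt (fun x : ℝ => Real.exp (-κ * x)) (Real.exp (-κ * r) * -κ) r := by
      have := ((hasDerivAt_id r).const_mul (-κ)).exp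
      simpa using this
    exact ((hf1 r).neg.add ((hF r).const_mul κ)).mul he
  have hHd : Differentiable ℝ H := fun r => (hH r).differentiableAt
  have hHmono : MonotoneOn H (Icc a b) := by
    apply monotoneOn_of_deriv_nonneg (convex_Icc a b) hHd.continuous.continuousOn
      hHd.differentiableOn
    intro x hx
    rw [interior_Icc] at hx
    rw [(hH x).deriv]
    have hx' : x ∈ Icc a b := Ioo_subset_Icc_self hx
    have h8 : 0 ≤ -f1 x - κ ^ 2 * F x := by
      have := hstep x hx'; linarith
    nlinarith [mul_nonneg (Real.exp_pos (-κ * x)).le h8]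
  have hHb : H b = 0 := by simp [H, hfb, hFb]
  have hFdec : ∀ r ∈ Icc a b, -f r + κ * F r ≤ 0 := by
    intro r hr
    have h9 : (-f r + κ * F r) * Real.exp (-κ * r) ≤ 0 := by
      have := hHmono hr (right_mem_Icc.mpr hab.le) hr.2
      rwa [hHb] at this
    have hE := Real.exp_pos (-κ * r)
    nlinarith [h9, hE]
  set G : ℝ → ℝ := fun r => F r * Real.exp (κ * r) with hGdef
  have hG : ∀ r, HasDerivAt G ((-f r) * Real.exp (κ * r) + F r * (Real.exp (κ * r) * κ)) r := by
    intro r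
    have he : HasDerivAt (fun x : ℝ => Real.exp (κ * x)) (Real.exp (κ * r) * κ) r := by
      have := ((hasDerivAt_id r).const_mul κ).exp
      simpa using this
    exact (hF r).mul he
  have hGd : Differentiable ℝ G := fun r => (hG r).differentiableAt
  have hGanti : AntitoneOn G (Icc a b) := by
    apply antitoneOn_of_deriv_nonpos (convex_Icc a b) hGd.continuous.continuousOn
      hGd.differentiableOn
    intro x hx
    rw [interior_Icc] at hx
    rw [(hG x).deriv]
    have hx' : x ∈ Icc a b := Ioo_subset_Icc_self hx
    have := mul_nonpos_of_nonpos_of_nonneg (hFdec x hx') (Real.exp_pos (κ * x)).le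
    nlinarith [this]
  have hGle : G t ≤ G a := hGanti (left_mem_Icc.mpr hab.le) ht ht.1
  show F t ≤ F a * Real.exp (-κ * (t - a))
  calc F t = (F t * Real.exp (κ * t)) * Real.exp (-(κ * t)) := by
        rw [mul_assoc, ← Real.exp_add]; simp
    _ ≤ (F a * Real.exp (κ * a)) * Real.exp (-(κ * t)) :=
        mul_le_mul_of_nonneg_right hGle (Real.exp_nonneg _)
    _ = F a * Real.exp (-κ * (t - a)) := by
        rw [mul_assoc, ← Real.exp_add]; ring_nf

private lemma decay_left (a b K κ : ℝ) (ha : 0 < a) (hab : a < b) (hK : 0 ≤ K)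
    (hκ0 : 0 ≤ κ) (hκ : κ ^ 2 ≤ 2 * K * a / b)
    (ψ : ℝ → ℝ) (hψ : ContDiff ℝ 2 ψ) (hψa : ψ a = 0)
    (hode : ∀ r ∈ Ioo a b, K * ψ r ^ 2 ≤ (deriv (deriv ψ) r + (1 / r) * deriv ψ r) * ψ r)
    (t : ℝ) (ht : t ∈ Icc a b) :
    (∫ r in a..t, ψ r ^ 2) ≤ (∫ r in a..b, ψ r ^ 2) * Real.exp (-κ * (b - t)) := by
  obtain ⟨hd0, hd1, hc2⟩ := cd2 ψ hψ
  have hc0 : Continuous ψ := hd0.continuous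
  have hc1 : Continuous (deriv ψ) := hd1.continuous
  have hb0 : 0 < b := ha.trans hab
  set f : ℝ → ℝ := fun r => ψ r ^ 2 with hfdef
  set f1 : ℝ → ℝ := fun r => 2 * ψ r * deriv ψ r with hf1def
  set f2 : ℝ → ℝ := fun r => 2 * deriv ψ r ^ 2 + 2 * ψ r * deriv (deriv ψ) r with hf2def
  have hcf : Continuous f := hc0.pow 2
  have hcf1 : Continuous f1 := (continuous_const.mul hc0).mul hc1
  have hcf2 : Continuous f2 := (continuous_const.mul (hc1.pow 2)).add
    ((continuous_const.mul hc0).mul hc2)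
  have hf1 : ∀ r, HasDerivAt f (f1 r) r := by
    intro r
    have := ((hd0 r).hasDerivAt).pow 2
    simpa [f, f1, mul_comm, mul_assoc, Pi.pow_def] using this
  have hf2 : ∀ r, HasDerivAt f1 (f2 r) r := by
    intro r
    have h1 : HasDerivAt (fun x => 2 * ψ x) (2 * deriv ψ r) r := ((hd0 r).hasDerivAt).const_mul 2
    have h2 : HasDerivAt (deriv ψ) (deriv (deriv ψ) r) r := (hd1 r).hasDerivAt
    have h3 := h1.fun_mul h2
    refine h3.congr_deriv ?_
    simp [f2]; ring
  have hg : ∀ r, HasDerivAt (fun x => x * f1 x) (f1 r + r * f2 r) r := by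
    intro r
    have := (hasDerivAt_id r).fun_mul (hf2 r)
    refine this.congr_deriv ?_
    simp only [id_eq]
    ring
  have hfnn : ∀ r, 0 ≤ f r := fun r => sq_nonneg _
  have hfa : f a = 0 := by simp [f, hψa]
  have hf1a : f1 a = 0 := by
    have hmin : IsLocalMin f a := Filter.Eventually.of_forall fun x => by
      simp only [hfdef, hψa]
      nlinarith [sq_nonneg (ψ x)]
    have := hmin.deriv_eq_zero
    rwa [(hf1 a).deriv] at this
  have hkey : ∀ r ∈ Ioo a b, 2 * K * a * f r ≤ f1 r + r * f2 r := by
    intro r hr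
    have hr0 : 0 < r := ha.trans hr.1
    have hode' := hode r hr
    have hexp : f1 r + r * f2 r =
        2 * r * deriv ψ r ^ 2 +
          2 * r * ((deriv (deriv ψ) r + (1 / r) * deriv ψ r) * ψ r) := by
      field_simp [f1, f2]; ring
    have hfr : f r = ψ r ^ 2 := rfl
    rw [hexp, hfr]
    have h1 : 2 * K * a * ψ r ^ 2 ≤ 2 * K * r * ψ r ^ 2 := by
      nlinarith [mul_nonneg (mul_nonneg hK (sq_nonneg (ψ r)))
        (by linarith [hr.1] : (0:ℝ) ≤ r - a)]
    linarith [h1, mul_le_mul_of_nonneg_left hode' (by positivity : (0:ℝ) ≤ 2 * r),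
      mul_nonneg (by positivity : (0:ℝ) ≤ 2 * r) (sq_nonneg (deriv ψ r))]
  set F : ℝ → ℝ := fun u => ∫ x in a..u, f x with hFdef
  have hF : ∀ u, HasDerivAt F (f u) u := fun u =>
    intervalIntegral.integral_hasDerivAt_right (hcf.intervalIntegrable _ _)
      (hcf.stronglyMeasurableAtFilter _ _) hcf.continuousAt
  have hFnn : ∀ u, a ≤ u → 0 ≤ F u := fun u hu =>
    intervalIntegral.integral_nonneg hu (fun x _ => hfnn x)
  have hFa : F a = 0 := by simp [F]
  have hstep : ∀ r ∈ Icc a b, κ ^ 2 * F r ≤ f1 r := by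
    intro r hr
    have hr0 : 0 < r := lt_of_lt_of_le ha hr.1
    have hra : a ≤ r := hr.1
    have hftc : (∫ x in a..r, (f1 x + x * f2 x)) = r * f1 r - a * f1 a := by
      exact intervalIntegral.integral_eq_sub_of_hasDerivAt (fun x _ => hg x)
        ((hcf1.add (continuous_id.mul hcf2)).intervalIntegrable _ _)
    have hA : ∀ᵐ x : ℝ, x ≠ a := by
      rw [ae_iff]; simpa using measure_singleton a
    have hB : ∀ᵐ x : ℝ, x ≠ b := by
      rw [ae_iff]; simpa using measure_singleton b
    have hmono : (∫ x in a..r, 2 * K * a * f x) ≤ ∫ x in a..r, (f1 x + x * f2 x) := by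
      apply intervalIntegral.integral_mono_ae_restrict hra
        ((continuous_const.mul hcf).intervalIntegrable _ _)
        ((hcf1.add (continuous_id.mul hcf2)).intervalIntegrable _ _)
      filter_upwards [ae_restrict_mem measurableSet_Icc, ae_restrict_of_ae hA,
        ae_restrict_of_ae hB] with x hx hxa hxb
      refine hkey x ⟨?_, ?_⟩
      · exact lt_of_le_of_ne hx.1 (Ne.symm hxa)
      · exact lt_of_le_of_ne (le_trans hx.2 hr.2) hxb
    rw [intervalIntegral.integral_const_mul, hftc, hf1a] at hmono
    -- hmono : 2 * K * a * F r ≤ r * f1 r - a * 0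
    have hFr := hFnn r hra
    have h4 : κ ^ 2 * b ≤ 2 * K * a := (le_div_iff₀ hb0).mp hκ
    have h5 : κ ^ 2 * r ≤ κ ^ 2 * b := mul_le_mul_of_nonneg_left hr.2 (sq_nonneg κ)
    have h6 : r * (κ ^ 2 * F r) ≤ r * f1 r := by
      have h7 : κ ^ 2 * r * F r ≤ 2 * K * a * F r :=
        mul_le_mul_of_nonneg_right (h5.trans h4) hFr
      nlinarith [hmono]
    exact le_of_mul_le_mul_left h6 hr0
  set H : ℝ → ℝ := fun r => (f r - κ * F r) * Real.exp (κ * r) with hHdef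
  have hH : ∀ r, HasDerivAt H ((f1 r - κ * f r) * Real.exp (κ * r) +
      (f r - κ * F r) * (Real.exp (κ * r) * κ)) r := by
    intro r
    have he : HasDerivAt (fun x : ℝ => Real.exp (κ * x)) (Real.exp (κ * r) * κ) r := by
      have := ((hasDerivAt_id r).const_mul κ).exp
      simpa using this
    exact ((hf1 r).sub ((hF r).const_mul κ)).mul he
  have hHd : Differentiable ℝ H := fun r => (hH r).differentiableAt
  have hHmono : MonotoneOn H (Icc a b) := by
    apply monotoneOn_of_deriv_nonneg (convex_Icc a b) hHd.continuous.continuousOn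
      hHd.differentiableOn
    intro x hx
    rw [interior_Icc] at hx
    rw [(hH x).deriv]
    have hx' : x ∈ Icc a b := Ioo_subset_Icc_self hx
    have h8 : 0 ≤ f1 x - κ ^ 2 * F x := by
      have := hstep x hx'; linarith
    nlinarith [mul_nonneg (Real.exp_pos (κ * x)).le h8]
  have hHa : H a = 0 := by simp [H, hfa, hFa]
  have hFgrow : ∀ r ∈ Icc a b, 0 ≤ f r - κ * F r := by
    intro r hr
    have h9 : 0 ≤ (f r - κ * F r) * Real.exp (κ * r) := by
      have := hHmono (left_mem_Icc.mpr hab.le) hr hr.1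
      rwa [hHa] at this
    have hE := Real.exp_pos (κ * r)
    nlinarith [h9, hE]
  set G : ℝ → ℝ := fun r => F r * Real.exp (-κ * r) with hGdef
  have hG : ∀ r, HasDerivAt G (f r * Real.exp (-κ * r) + F r * (Real.exp (-κ * r) * -κ)) r := by
    intro r
    have he : HasDerivAt (fun x : ℝ => Real.exp (-κ * x)) (Real.exp (-κ * r) * -κ) r := by
      have := ((hasDerivAt_id r).const_mul (-κ)).exp
      simpa using this
    exact (hF r).mul he
  have hGd : Differentiable ℝ G := fun r => (hG r).differentiableAt
  have hGmono : MonotoneOn G (Icc a b) := by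
    apply monotoneOn_of_deriv_nonneg (convex_Icc a b) hGd.continuous.continuousOn
      hGd.differentiableOn
    intro x hx
    rw [interior_Icc] at hx
    rw [(hG x).deriv]
    have hx' : x ∈ Icc a b := Ioo_subset_Icc_self hx
    have := mul_nonneg (hFgrow x hx') (Real.exp_pos (-κ * x)).le
    nlinarith [this]
  have hGle : G t ≤ G b := hGmono ht (right_mem_Icc.mpr hab.le) ht.2
  show F t ≤ F b * Real.exp (-κ * (b - t))
  calc F t = (F t * Real.exp (-κ * t)) * Real.exp (κ * t) := by
        rw [mul_assoc, ← Real.exp_add]; simp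
    _ ≤ (F b * Real.exp (-κ * b)) * Real.exp (κ * t) :=
        mul_le_mul_of_nonneg_right hGle (Real.exp_nonneg _)
    _ = F b * Real.exp (-κ * (b - t)) := by
        rw [mul_assoc, ← Real.exp_add]; ring_nf

private lemma trunc_left (R₀ c c' : ℝ) (f : ℝ → ℝ) (hf : Continuous f)
    (hnn : ∀ x, 0 ≤ f x) (hcc' : c ≤ c') (hR : R₀ ≤ c') :
    (∫ r in R₀..c, f r) ≤ ∫ r in R₀..c', f r := by
  by_cases hc : R₀ ≤ c
  · exact intervalIntegral.integral_mono_interval le_rfl hc hcc'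
      (Filter.Eventually.of_forall fun x => hnn x) (hf.intervalIntegrable _ _)
  · push_neg at hc
    have h1 : (∫ r in R₀..c, f r) ≤ 0 := by
      rw [intervalIntegral.integral_symm]
      exact neg_nonpos.mpr (intervalIntegral.integral_nonneg hc.le fun x _ => hnn x)
    exact h1.trans (intervalIntegral.integral_nonneg hR fun x _ => hnn x)

private lemma trunc_right (R₂ c c' : ℝ) (f : ℝ → ℝ) (hf : Continuous f)
    (hnn : ∀ x, 0 ≤ f x) (hcc' : c' ≤ c) (hR : c' ≤ R₂) :
    (∫ r in c..R₂, f r) ≤ ∫ r in c'..R₂, f r := by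
  by_cases hc : c ≤ R₂
  · exact intervalIntegral.integral_mono_interval hcc' hc le_rfl
      (Filter.Eventually.of_forall fun x => hnn x) (hf.intervalIntegrable _ _)
  · push_neg at hc
    have h1 : (∫ r in c..R₂, f r) ≤ 0 := by
      rw [intervalIntegral.integral_symm]
      exact neg_nonpos.mpr (intervalIntegral.integral_nonneg hc.le fun x _ => hnn x)
    exact h1.trans (intervalIntegral.integral_nonneg hR fun x _ => hnn x)


/-- Exponential concentration near the interface: a normalized eigenfunction of
`P_h` with eigenvalue `E₀ + ε(h)` is `O(e^{−d/h})` in `L²` away from `R₁`. -/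
theorem stmt_15 (R₀ R₁ R₂ cm cp : ℝ)
    (hR₀ : 0 < R₀) (hR₀₁ : R₀ < R₁) (hR₁₂ : R₁ < R₂)
    (hcm : 0 < cm) (hcmp : cm < cp)
    (hjump : cm / R₁ ^ 2 < cp / R₂ ^ 2)
    (εfn : ℝ → ℝ) (hεfn : Tendsto εfn (nhdsWithin 0 (Ioi 0)) (nhds 0)) :
    ∃ h₀ > 0, ∀ ε > 0, ∃ C > 0, ∃ d > 0, ∀ h ∈ Ioc (0 : ℝ) h₀, ∀ ψm ψp : ℝ → ℝ,
      ContDiff ℝ 2 ψm → ContDiff ℝ 2 ψp →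
      ψm R₀ = 0 → ψp R₂ = 0 → ψm R₁ = ψp R₁ →
      cp * deriv ψm R₁ = cm * deriv ψp R₁ →
      (∀ r ∈ Ioo R₀ R₁,
        -(h ^ 2 * cm) * (deriv (deriv ψm) r + (1 / r) * deriv ψm r) +
          (cm / r ^ 2) * ψm r = (cm / R₁ ^ 2 + εfn h) * ψm r) →
      (∀ r ∈ Ioo R₁ R₂,
        -(h ^ 2 * cp) * (deriv (deriv ψp) r + (1 / r) * deriv ψp r) +
          (cp / r ^ 2) * ψp r = (cm / R₁ ^ 2 + εfn h) * ψp r) →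
      (∫ r in R₀..R₁, (ψm r) ^ 2) + (∫ r in R₁..R₂, (ψp r) ^ 2) = 1 →
      Real.sqrt ((∫ r in R₀..(R₁ - ε), (ψm r) ^ 2) +
          (∫ r in (R₁ + ε)..R₂, (ψp r) ^ 2)) ≤ C * Real.exp (-d / h) := by
  have hR₁ : 0 < R₁ := hR₀.trans hR₀₁
  have hR₂ : 0 < R₂ := hR₁.trans hR₁₂
  have hcp : 0 < cp := hcm.trans hcmp
  obtain ⟨δ, hδdef, hδ⟩ : ∃ δ, δ = (cp / R₂ ^ 2 - cm / R₁ ^ 2) / 2 ∧ 0 < δ :=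
    ⟨_, rfl, by linarith⟩
  obtain ⟨η, hη, hηp⟩ := (Metric.tendsto_nhdsWithin_nhds.mp hεfn) δ hδ
  refine ⟨η / 2, by positivity, ?_⟩
  intro ε hε
  obtain ⟨ε', hε'def⟩ : ∃ ε', ε' = min ε (min ((R₁ - R₀) / 2) ((R₂ - R₁) / 2)) := ⟨_, rfl⟩
  have hε'0 : 0 < ε' := by
    rw [hε'def]; exact lt_min hε (lt_min (by linarith) (by linarith))
  have hε'ε : ε' ≤ ε := hε'def ▸ min_le_left _ _
  have hε'1 : ε' ≤ (R₁ - R₀) / 2 := hε'def ▸ le_trans (min_le_right _ _) (min_le_left _ _)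
  have hε'2 : ε' ≤ (R₂ - R₁) / 2 := hε'def ▸ le_trans (min_le_right _ _) (min_le_right _ _)
  obtain ⟨b', hb'def⟩ : ∃ b', b' = R₁ - ε' / 2 := ⟨_, rfl⟩
  have hb'0 : R₀ < b' := by rw [hb'def]; linarith
  have hb'1 : b' < R₁ := by rw [hb'def]; linarith
  have hb'pos : 0 < b' := hR₀.trans hb'0
  obtain ⟨δ', hδ'def⟩ : ∃ δ', δ' = (cm / b' ^ 2 - cm / R₁ ^ 2) / 2 := ⟨_, rfl⟩
  have hδ' : 0 < δ' := by
    have h1 : cm / R₁ ^ 2 < cm / b' ^ 2 :=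
      div_lt_div_of_pos_left hcm (by positivity) (pow_lt_pow_left₀ hb'1 hb'pos.le two_ne_zero)
    rw [hδ'def]; linarith
  obtain ⟨η', hη', hη'p⟩ := (Metric.tendsto_nhdsWithin_nhds.mp hεfn) δ' hδ'
  obtain ⟨h₁, hh₁def⟩ : ∃ h₁, h₁ = min (η' / 2) (η / 2) := ⟨_, rfl⟩
  have hh₁ : 0 < h₁ := by rw [hh₁def]; exact lt_min (by positivity) (by positivity)
  obtain ⟨aP, haPdef⟩ : ∃ aP, aP = Real.sqrt (2 * δ * R₁ / (cp * R₂)) := ⟨_, rfl⟩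
  obtain ⟨aM, haMdef⟩ : ∃ aM, aM = Real.sqrt (2 * δ' * R₀ / (cm * b')) := ⟨_, rfl⟩
  have haP : 0 < aP := haPdef ▸ Real.sqrt_pos.mpr (by positivity)
  have haM : 0 < aM := haMdef ▸ Real.sqrt_pos.mpr (by positivity)
  obtain ⟨d, hddef⟩ : ∃ d, d = min (aM * (ε' / 2)) (aP * ε') / 2 := ⟨_, rfl⟩
  have hd : 0 < d := by
    rw [hddef]
    exact div_pos (lt_min (by positivity) (by positivity)) two_pos
  have hd1 : 2 * d ≤ aM * (ε' / 2) := by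
    have := min_le_left (aM * (ε' / 2)) (aP * ε'); rw [hddef]; linarith
  have hd2 : 2 * d ≤ aP * ε' := by
    have := min_le_right (aM * (ε' / 2)) (aP * ε'); rw [hddef]; linarith
  refine ⟨max (Real.sqrt 2) (Real.exp (d / h₁)),
    lt_of_lt_of_le (by positivity) (le_max_left _ _), d, hd, ?_⟩
  intro h hh ψm ψp hψm2 hψp2 hm0 hp2 _ _ hodem hodep hnorm
  have hh0 : 0 < h := hh.1
  have hεδ : |εfn h| < δ := by
    have h1 : dist h 0 < η := by
      rw [Real.dist_eq, sub_zero, abs_of_pos hh0]; linarith [hh.2]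
    have := hηp (mem_Ioi.mpr hh0) h1
    rwa [Real.dist_eq, sub_zero] at this
  have hcψm : Continuous fun r => ψm r ^ 2 := (hψm2.continuous).pow 2
  have hcψp : Continuous fun r => ψp r ^ 2 := (hψp2.continuous).pow 2
  have hAm0 : 0 ≤ ∫ r in R₀..R₁, ψm r ^ 2 :=
    intervalIntegral.integral_nonneg hR₀₁.le fun x _ => sq_nonneg _
  have hAp0 : 0 ≤ ∫ r in R₁..R₂, ψp r ^ 2 :=
    intervalIntegral.integral_nonneg hR₁₂.le fun x _ => sq_nonneg _
  have hAm1 : (∫ r in R₀..R₁, ψm r ^ 2) ≤ 1 := by linarith only [hnorm, hAp0]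
  have hAp1 : (∫ r in R₁..R₂, ψp r ^ 2) ≤ 1 := by linarith only [hnorm, hAm0]
  -- plus side
  have hodeP : ∀ r ∈ Ioo R₁ R₂, (δ / (h ^ 2 * cp)) * ψp r ^ 2 ≤
      (deriv (deriv ψp) r + (1 / r) * deriv ψp r) * ψp r := by
    intro r hr
    have hr0 : 0 < r := hR₁.trans hr.1
    have heq := hodep r hr
    have hpos : 0 < h ^ 2 * cp := by positivity
    have hrR₂ : cp / R₂ ^ 2 ≤ cp / r ^ 2 :=
      div_le_div_of_nonneg_left hcp.le (by positivity) (pow_le_pow_left₀ hr0.le hr.2.le 2)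
    have habs := abs_lt.mp hεδ
    have h2 : δ * ψp r ^ 2 ≤ (cp / r ^ 2 - (cm / R₁ ^ 2 + εfn h)) * ψp r ^ 2 := by
      have hcoef : δ ≤ cp / r ^ 2 - (cm / R₁ ^ 2 + εfn h) := by
        linarith only [habs.2, hrR₂, hδdef.le, hδdef.ge]
      exact mul_le_mul_of_nonneg_right hcoef (sq_nonneg (ψp r))
    have heqψ : (-(h ^ 2 * cp) * (deriv (deriv ψp) r + 1 / r * deriv ψp r) +
        cp / r ^ 2 * ψp r) * ψp r = ((cm / R₁ ^ 2 + εfn h) * ψp r) * ψp r := by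
      rw [heq]
    rw [div_mul_eq_mul_div, div_le_iff₀ hpos]
    linarith only [heqψ, h2]
  have hκP : (aP / h) ^ 2 ≤ 2 * (δ / (h ^ 2 * cp)) * R₁ / R₂ := by
    rw [div_pow, haPdef, Real.sq_sqrt (by positivity)]
    apply le_of_eq
    field_simp
  have hdecP := decay_right R₁ R₂ (δ / (h ^ 2 * cp)) (aP / h) hR₁ hR₁₂ (by positivity)
    (by positivity) hκP ψp hψp2 hp2 hodeP (R₁ + ε') ⟨by linarith, by linarith⟩
  have hSp : (∫ r in (R₁ + ε)..R₂, ψp r ^ 2) ≤ Real.exp (-(aP * ε') / h) := by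
    have t1 : (∫ r in (R₁ + ε)..R₂, ψp r ^ 2) ≤ ∫ r in (R₁ + ε')..R₂, ψp r ^ 2 :=
      trunc_right R₂ (R₁ + ε) (R₁ + ε') _ hcψp (fun x => sq_nonneg _)
        (by linarith) (by linarith)
    have harg : -(aP / h) * (R₁ + ε' - R₁) = -(aP * ε') / h := by
      field_simp <;> ring
    rw [harg] at hdecP
    have t2 : (∫ r in R₁..R₂, ψp r ^ 2) * Real.exp (-(aP * ε') / h) ≤
        Real.exp (-(aP * ε') / h) := mul_le_of_le_one_left (Real.exp_nonneg _) hAp1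
    exact t1.trans (hdecP.trans t2)
  by_cases hcase : h ≤ h₁
  · -- small h : both sides decay
    have hεδ' : |εfn h| < δ' := by
      have h1 : dist h 0 < η' := by
        rw [Real.dist_eq, sub_zero, abs_of_pos hh0]
        have : h₁ ≤ η' / 2 := hh₁def ▸ min_le_left _ _
        linarith
      have := hη'p (mem_Ioi.mpr hh0) h1
      rwa [Real.dist_eq, sub_zero] at this
    have hodeM : ∀ r ∈ Ioo R₀ b', (δ' / (h ^ 2 * cm)) * ψm r ^ 2 ≤
        (deriv (deriv ψm) r + (1 / r) * deriv ψm r) * ψm r := by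
      intro r hr
      have hr0 : 0 < r := hR₀.trans hr.1
      have heq := hodem r ⟨hr.1, hr.2.trans hb'1⟩
      have hpos : 0 < h ^ 2 * cm := by positivity
      have hrb' : cm / b' ^ 2 ≤ cm / r ^ 2 :=
        div_le_div_of_nonneg_left hcm.le (by positivity) (pow_le_pow_left₀ hr0.le hr.2.le 2)
      have habs := abs_lt.mp hεδ'
      have h2 : δ' * ψm r ^ 2 ≤ (cm / r ^ 2 - (cm / R₁ ^ 2 + εfn h)) * ψm r ^ 2 := by
        have hcoef : δ' ≤ cm / r ^ 2 - (cm / R₁ ^ 2 + εfn h) := by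
          linarith only [habs.2, hrb', hδ'def.le, hδ'def.ge]
        exact mul_le_mul_of_nonneg_right hcoef (sq_nonneg (ψm r))
      have heqψ : (-(h ^ 2 * cm) * (deriv (deriv ψm) r + 1 / r * deriv ψm r) +
          cm / r ^ 2 * ψm r) * ψm r = ((cm / R₁ ^ 2 + εfn h) * ψm r) * ψm r := by
        rw [heq]
      rw [div_mul_eq_mul_div, div_le_iff₀ hpos]
      linarith only [heqψ, h2]
    have hκM : (aM / h) ^ 2 ≤ 2 * (δ' / (h ^ 2 * cm)) * R₀ / b' := by
      rw [div_pow, haMdef, Real.sq_sqrt (by positivity)]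
      apply le_of_eq
      field_simp
    have hdecM := decay_left R₀ b' (δ' / (h ^ 2 * cm)) (aM / h) hR₀ hb'0 (by positivity)
      (by positivity) hκM ψm hψm2 hm0 hodeM (R₁ - ε')
      ⟨by linarith, by rw [hb'def]; linarith⟩
    have hSm : (∫ r in R₀..(R₁ - ε), ψm r ^ 2) ≤ Real.exp (-(aM * (ε' / 2)) / h) := by
      have t1 : (∫ r in R₀..(R₁ - ε), ψm r ^ 2) ≤ ∫ r in R₀..(R₁ - ε'), ψm r ^ 2 :=
        trunc_left R₀ (R₁ - ε) (R₁ - ε') _ hcψm (fun x => sq_nonneg _)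
          (by linarith) (by linarith)
      have harg : -(aM / h) * (b' - (R₁ - ε')) = -(aM * (ε' / 2)) / h := by
        rw [hb'def]; field_simp <;> ring
      rw [harg] at hdecM
      have hIb' : (∫ r in R₀..b', ψm r ^ 2) ≤ 1 := by
        refine le_trans (trunc_left R₀ b' R₁ _ hcψm (fun x => sq_nonneg _)
          hb'1.le hR₀₁.le) hAm1
      have hIb'0 : 0 ≤ ∫ r in R₀..b', ψm r ^ 2 :=
        intervalIntegral.integral_nonneg hb'0.le fun x _ => sq_nonneg _
      have t2 : (∫ r in R₀..b', ψm r ^ 2) * Real.exp (-(aM * (ε' / 2)) / h) ≤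
          Real.exp (-(aM * (ε' / 2)) / h) := mul_le_of_le_one_left (Real.exp_nonneg _) hIb'
      exact t1.trans (hdecM.trans t2)
    have e1 : Real.exp (-(aM * (ε' / 2)) / h) ≤ Real.exp (-(2 * d) / h) := by
      apply Real.exp_le_exp.mpr
      rw [neg_div, neg_div, neg_le_neg_iff]
      exact (div_le_div_iff_of_pos_right hh0).mpr hd1
    have e2 : Real.exp (-(aP * ε') / h) ≤ Real.exp (-(2 * d) / h) := by
      apply Real.exp_le_exp.mpr
      rw [neg_div, neg_div, neg_le_neg_iff]
      exact (div_le_div_iff_of_pos_right hh0).mpr hd2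
    have hsum : (∫ r in R₀..(R₁ - ε), ψm r ^ 2) + (∫ r in (R₁ + ε)..R₂, ψp r ^ 2) ≤
        2 * Real.exp (-(2 * d) / h) := by linarith only [hSm, hSp, e1, e2]
    calc Real.sqrt ((∫ r in R₀..(R₁ - ε), ψm r ^ 2) + (∫ r in (R₁ + ε)..R₂, ψp r ^ 2))
        ≤ Real.sqrt (2 * Real.exp (-(2 * d) / h)) := Real.sqrt_le_sqrt hsum
      _ = Real.sqrt 2 * Real.exp (-d / h) := by
          rw [Real.sqrt_mul (by norm_num)]
          congr 1
          rw [← Real.exp_half]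
          congr 1
          ring
      _ ≤ _ := mul_le_mul_of_nonneg_right (le_max_left _ _) (Real.exp_nonneg _)
  · -- large h : trivial bound
    push_neg at hcase
    have t1 : (∫ r in R₀..(R₁ - ε), ψm r ^ 2) ≤ ∫ r in R₀..R₁, ψm r ^ 2 :=
      trunc_left R₀ (R₁ - ε) R₁ _ hcψm (fun x => sq_nonneg _) (by linarith) hR₀₁.le
    have t2 : (∫ r in (R₁ + ε)..R₂, ψp r ^ 2) ≤ ∫ r in R₁..R₂, ψp r ^ 2 :=
      trunc_right R₂ (R₁ + ε) R₁ _ hcψp (fun x => sq_nonneg _) (by linarith) hR₁₂.le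
    have hS1 : (∫ r in R₀..(R₁ - ε), ψm r ^ 2) + (∫ r in (R₁ + ε)..R₂, ψp r ^ 2) ≤ 1 := by
      linarith only [t1, t2, hnorm]
    calc Real.sqrt ((∫ r in R₀..(R₁ - ε), ψm r ^ 2) + (∫ r in (R₁ + ε)..R₂, ψp r ^ 2))
        ≤ 1 := by
          have := Real.sqrt_le_sqrt hS1
          simpa using this
      _ ≤ Real.exp (d / h₁) * Real.exp (-d / h) := by
          rw [← Real.exp_add]
          apply Real.one_le_exp_iff.mpr
          have h2 : d / h₁ + -d / h = d / h₁ - d / h := by ring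
          have h3 : d / h ≤ d / h₁ := div_le_div_of_nonneg_left hd.le hh₁ hcase.le
          rw [h2]; linarith only [h3]
      _ ≤ _ := mul_le_mul_of_nonneg_right (le_max_right _ _) (Real.exp_nonneg _)
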